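/- arXiv:1302.4075 — 2 statements merged into one kernel-verified Lean document; each statement's English description precedes it below -/
import Mathlib

section
/- Let k be a field and let G₁, G₂ be abelian groups. In the group algebra k[G₁ × G₂], let J denote the augmentation ideal, and let I₁ and I₂ denote the ideals of k[G₁ × G₂] generated by the images of the augmentation ideals J₁ ⊆ k[G₁] and J₂ ⊆ k[G₂] under the algebra maps induced by the inclusions G₁ → G₁ × G₂ and G₂ → G₁ × G₂. Then for every n ≥ 0, J^n = Σ_{s+t=n} I₁^s · I₂^t. -/
universe u
open MonoidAlgebra

lemma aug_span (k : Type u) [Field k] (G : Type u) [CommGroup G] :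
    (RingHom.ker (MonoidAlgebra.lift k k G 1) : Ideal (MonoidAlgebra k G)) =
      Ideal.span (Set.range fun g : G => MonoidAlgebra.of k G g - 1) := by
  apply le_antisymm
  · intro x hx
    have key : ∀ y : MonoidAlgebra k G, y - algebraMap k _ (MonoidAlgebra.lift k k G 1 y) ∈
        Ideal.span (Set.range fun g : G => MonoidAlgebra.of k G g - 1) := by
      intro y
      induction y using MonoidAlgebra.induction_linear with
      | zero => simp
      | add a b ha hb =>
        convert Ideal.add_mem _ ha hb using 1
        simp only [map_add]; ring
      | single g r =>
        convert Ideal.mul_mem_left _ (algebraMap k _ r)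
          (Ideal.subset_span ⟨g, rfl⟩ : MonoidAlgebra.of k G g - 1 ∈
            Ideal.span (Set.range fun g : G => MonoidAlgebra.of k G g - 1)) using 1
        rw [MonoidAlgebra.lift_single]
        simp [mul_sub, MonoidAlgebra.of_apply]
    have := key x
    rwa [RingHom.mem_ker.mp hx, map_zero, sub_zero] at this
  · rw [Ideal.span_le]
    rintro _ ⟨g, rfl⟩
    simp [RingHom.mem_ker, SetLike.mem_coe]

lemma aug_sup (k : Type u) [Field k] (G₁ G₂ : Type u) [CommGroup G₁] [CommGroup G₂] :
    (RingHom.ker (MonoidAlgebra.lift k k (G₁ × G₂) 1) : Ideal (MonoidAlgebra k (G₁ × G₂))) =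
      (Ideal.map (MonoidAlgebra.mapDomainAlgHom k k (MonoidHom.inl G₁ G₂))
          (RingHom.ker (MonoidAlgebra.lift k k G₁ 1))) +
      (Ideal.map (MonoidAlgebra.mapDomainAlgHom k k (MonoidHom.inr G₁ G₂))
          (RingHom.ker (MonoidAlgebra.lift k k G₂ 1))) := by
  apply le_antisymm
  · rw [aug_span, Ideal.span_le]
    rintro _ ⟨⟨g₁, g₂⟩, rfl⟩
    have key : MonoidAlgebra.of k (G₁ × G₂) (g₁, g₂) - 1 =
        (MonoidAlgebra.of k (G₁ × G₂) (g₁, 1) - 1)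
          + (MonoidAlgebra.of k (G₁ × G₂) (g₁, 1)) * (MonoidAlgebra.of k (G₁ × G₂) (1, g₂) - 1) := by
      rw [mul_sub, ← map_mul]
      simp only [← map_mul, mul_one, Prod.mk_mul_mk, one_mul]
      ring
    show MonoidAlgebra.of k (G₁ × G₂) (g₁, g₂) - 1 ∈ _
    rw [key]
    have h1 : MonoidAlgebra.of k (G₁ × G₂) (g₁, 1) - 1 =
        (MonoidAlgebra.mapDomainAlgHom k k (MonoidHom.inl G₁ G₂))
          (MonoidAlgebra.of k G₁ g₁ - 1) := by
      rw [map_sub, map_one]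
      simp [MonoidAlgebra.of_apply, Finsupp.mapDomain_single]
    have h2 : MonoidAlgebra.of k (G₁ × G₂) (1, g₂) - 1 =
        (MonoidAlgebra.mapDomainAlgHom k k (MonoidHom.inr G₁ G₂))
          (MonoidAlgebra.of k G₂ g₂ - 1) := by
      rw [map_sub, map_one]
      simp [MonoidAlgebra.of_apply, Finsupp.mapDomain_single]
    have m1 : MonoidAlgebra.of k G₁ g₁ - 1 ∈ RingHom.ker (MonoidAlgebra.lift k k G₁ 1) := by
      simp [RingHom.mem_ker]
    have m2 : MonoidAlgebra.of k G₂ g₂ - 1 ∈ RingHom.ker (MonoidAlgebra.lift k k G₂ 1) := by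
      simp [RingHom.mem_ker]
    rw [h1, h2]
    exact Submodule.add_mem_sup (Ideal.mem_map_of_mem _ m1)
      (Ideal.mul_mem_left _ _ (Ideal.mem_map_of_mem _ m2))
  · apply sup_le <;> rw [Ideal.map_le_iff_le_comap] <;> intro x hx <;>
      simp only [Ideal.mem_comap, RingHom.mem_ker] at hx ⊢
    · have comp : ((MonoidAlgebra.lift k k (G₁ × G₂) 1).comp
          (MonoidAlgebra.mapDomainAlgHom k k (MonoidHom.inl G₁ G₂))) =
          MonoidAlgebra.lift k k G₁ 1 := by
        refine MonoidAlgebra.algHom_ext ?_ (Subsingleton.elim _ _)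
        intro g
        simp
      calc (MonoidAlgebra.lift k k (G₁ × G₂) 1)
            ((MonoidAlgebra.mapDomainAlgHom k k (MonoidHom.inl G₁ G₂)) x)
          = ((MonoidAlgebra.lift k k (G₁ × G₂) 1).comp
              (MonoidAlgebra.mapDomainAlgHom k k (MonoidHom.inl G₁ G₂))) x := rfl
        _ = (MonoidAlgebra.lift k k G₁ 1) x := by rw [comp]
        _ = 0 := hx
    · have comp : ((MonoidAlgebra.lift k k (G₁ × G₂) 1).comp
          (MonoidAlgebra.mapDomainAlgHom k k (MonoidHom.inr G₁ G₂))) =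
          MonoidAlgebra.lift k k G₂ 1 := by
        refine MonoidAlgebra.algHom_ext ?_ (Subsingleton.elim _ _)
        intro g
        simp
      calc (MonoidAlgebra.lift k k (G₁ × G₂) 1)
            ((MonoidAlgebra.mapDomainAlgHom k k (MonoidHom.inr G₁ G₂)) x)
          = ((MonoidAlgebra.lift k k (G₁ × G₂) 1).comp
              (MonoidAlgebra.mapDomainAlgHom k k (MonoidHom.inr G₁ G₂))) x := rfl
        _ = (MonoidAlgebra.lift k k G₂ 1) x := by rw [comp]
        _ = 0 := hx

lemma ideal_natCast_of_pos {R : Type u} [CommRing R] {c : ℕ} (h : 0 < c) :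
    (c : Ideal R) = 1 := by
  obtain ⟨m, rfl⟩ := Nat.exists_eq_add_of_lt h
  rw [zero_add, Nat.cast_succ]
  apply le_antisymm
  · rw [Ideal.one_eq_top]; exact le_top
  · rw [Ideal.add_eq_sup]; exact le_sup_right


/-- for a field `k` and abelian groups `G₁, G₂`, in the group algebra
`k[G₁ × G₂]` the powers of the augmentation ideal `J` satisfy
`Jⁿ = Σ_{s+t=n} I₁ˢ · I₂ᵗ`, where `I₁, I₂` are the ideals generated by the images of the
augmentation ideals of `k[G₁]` and `k[G₂]` under the maps induced by the inclusions. -/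
theorem augmentation_ideal_power_of_product
    (k : Type u) [Field k] (G₁ G₂ : Type u) [CommGroup G₁] [CommGroup G₂] (n : ℕ) :
    -- the augmentation ideal of `k[G₁ × G₂]`
    (RingHom.ker (MonoidAlgebra.lift k k (G₁ × G₂) 1) : Ideal (MonoidAlgebra k (G₁ × G₂))) ^ n =
      ∑ p ∈ Finset.HasAntidiagonal.antidiagonal n,
        (Ideal.map (MonoidAlgebra.mapDomainAlgHom k k (MonoidHom.inl G₁ G₂))
            (RingHom.ker (MonoidAlgebra.lift k k G₁ 1))) ^ p.1 *
        (Ideal.map (MonoidAlgebra.mapDomainAlgHom k k (MonoidHom.inr G₁ G₂))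
            (RingHom.ker (MonoidAlgebra.lift k k G₂ 1))) ^ p.2 := by
  rw [aug_sup, add_pow, Finset.Nat.sum_antidiagonal_eq_sum_range_succ_mk]
  refine Finset.sum_congr rfl fun i hi => ?_
  rw [ideal_natCast_of_pos (Nat.choose_pos (Finset.mem_range_succ_iff.mp hi)), mul_one]
end

section
/- Let k be an algebraically closed field and let G be a finitely generated abelian group. Then the map sending a group homomorphism ρ : G → kˣ to the kernel of its k-linear extension ρ̄ : k[G] → k is a bijection from the set Hom(G, kˣ) of kˣ-valued characters of G onto the set of maximal ideals of the group algebra k[G]. -/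
universe u

/-- for an algebraically closed field `k` and a finitely generated abelian
group `G`, the map sending a character `ρ : G → kˣ` to the kernel of its `k`-linear
extension `k[G] → k` is a bijection from `Hom(G, kˣ)` onto the set of maximal ideals of
the group algebra `k[G]`. -/
theorem characters_biject_onto_maximal_ideals
    (k : Type u) [Field k] [IsAlgClosed k]
    (G : Type u) [CommGroup G] [Group.FG G] :
    Set.BijOn
      (fun ρ : G →* kˣ =>
        (RingHom.ker (MonoidAlgebra.lift k k G ((Units.coeHom k).comp ρ)) :
          Ideal (MonoidAlgebra k G)))
      Set.univ
      { I : Ideal (MonoidAlgebra k G) | I.IsMaximal } := by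
  have surjLift : ∀ ρ : G →* kˣ,
      Function.Surjective (MonoidAlgebra.lift k k G ((Units.coeHom k).comp ρ)) := by
    intro ρ c
    exact ⟨algebraMap k _ c, (MonoidAlgebra.lift k k G _).commutes c⟩
  refine ⟨fun ρ _ => ?_, fun ρ₁ _ ρ₂ _ h => ?_, fun I hI => ?_⟩
  · exact RingHom.ker_isMaximal_of_surjective _ (surjLift ρ)
  · -- injectivity
    ext g
    have h1 : (MonoidAlgebra.lift k k G ((Units.coeHom k).comp ρ₁))
        (MonoidAlgebra.of k G g - algebraMap k _ (ρ₁ g : k)) = 0 := by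
      simp [MonoidAlgebra.lift_of, sub_eq_zero]
    have h' : RingHom.ker (MonoidAlgebra.lift k k G ((Units.coeHom k).comp ρ₁)) =
        RingHom.ker (MonoidAlgebra.lift k k G ((Units.coeHom k).comp ρ₂)) := h
    have h2 : (MonoidAlgebra.of k G g - algebraMap k _ (ρ₁ g : k)) ∈
        RingHom.ker (MonoidAlgebra.lift k k G ((Units.coeHom k).comp ρ₂)) := by
      rw [← h']; exact h1
    rw [RingHom.mem_ker, map_sub, MonoidAlgebra.lift_of,
      AlgHom.commutes, sub_eq_zero] at h2
    exact h2.symm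
  · -- surjectivity
    haveI : I.IsMaximal := hI
    haveI : Monoid.FG G := Group.fg_iff_monoid_fg.mp ‹Group.FG G›
    haveI : Algebra.FiniteType k (MonoidAlgebra k G ⧸ I) :=
      (inferInstance : Algebra.FiniteType k (MonoidAlgebra k G)).of_surjective
        (Ideal.Quotient.mkₐ k I) Ideal.Quotient.mk_surjective
    haveI : Module.Finite k (MonoidAlgebra k G ⧸ I) := by
      letI : Field (MonoidAlgebra k G ⧸ I) := Ideal.Quotient.field I
      exact finite_of_finite_type_of_isJacobsonRing k _
    haveI : Algebra.IsIntegral k (MonoidAlgebra k G ⧸ I) :=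
      Algebra.IsIntegral.of_finite k _
    have hbij : Function.Bijective (algebraMap k (MonoidAlgebra k G ⧸ I)) :=
      ⟨(algebraMap k _).injective,
        IsAlgClosed.algebraMap_bijective_of_isIntegral.2⟩
    let e : k ≃ₐ[k] (MonoidAlgebra k G ⧸ I) :=
      AlgEquiv.ofBijective (Algebra.ofId k _) hbij
    let φ : MonoidAlgebra k G →ₐ[k] k :=
      (e.symm.toAlgHom).comp (Ideal.Quotient.mkₐ k I)
    have hker : RingHom.ker φ = I := by
      ext x
      simp only [RingHom.mem_ker, φ, AlgHom.comp_apply, Ideal.Quotient.mkₐ_eq_mk]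
      show e.symm (Ideal.Quotient.mk I x) = 0 ↔ x ∈ I
      rw [map_eq_zero_iff _ e.symm.injective, Ideal.Quotient.eq_zero_iff_mem]
    refine ⟨((φ : MonoidAlgebra k G →* k).comp (MonoidAlgebra.of k G)).toHomUnits,
      Set.mem_univ _, ?_⟩
    have hρ : (Units.coeHom k).comp
        ((φ : MonoidAlgebra k G →* k).comp (MonoidAlgebra.of k G)).toHomUnits
        = (MonoidAlgebra.lift k k G).symm φ := by
      ext g
      simp [MonoidAlgebra.lift_symm_apply]
    show RingHom.ker ((MonoidAlgebra.lift k k G) ((Units.coeHom k).comp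
        ((φ : MonoidAlgebra k G →* k).comp (MonoidAlgebra.of k G)).toHomUnits)) = I
    rw [hρ, (MonoidAlgebra.lift k k G).apply_symm_apply]
    exact hker
end
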